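/- For F : ℝⁿ → ℝ, h : ℝᵈ → ℝ, matrices A ∈ ℝ^{p×n}, B ∈ ℝ^{p×d}, c ∈ ℝᵖ and ρ > 0, let L_ρ(x,y,λ) = F(x) + h(y) − ⟨λ, Ax + By − c⟩ + (ρ/2)‖Ax + By − c‖². Fix x ∈ ℝⁿ, y ∈ ℝᵈ, λ_prev ∈ ℝᵖ, and suppose λ = λ_prev − ρ(Ax + By − c). Then for every ρ′ > 0, L_{ρ′}(x, y, λ) = L_ρ(x, y, λ_prev) + (1/ρ)·‖λ − λ_prev‖² + ((ρ′ − ρ)/(2ρ²))·‖λ − λ_prev‖². In particular, if ρ′ ≥ ρ and one replaces the last term's exact value by an upper bound, L_{ρ′}(x, y, λ) ≤ L_ρ(x, y, λ_prev) + (1/ρ + (ρ′ − ρ)/(2ρ²))·‖λ − λ_prev‖². -/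
import Mathlib


open Matrix
open scoped RealInnerProductSpace

/-- The action of a real matrix on Euclidean space. -/
noncomputable def mvec {m n : ℕ} (A : Matrix (Fin m) (Fin n) ℝ)
    (x : EuclideanSpace ℝ (Fin n)) : EuclideanSpace ℝ (Fin m) :=
  (WithLp.equiv 2 (Fin m → ℝ)).symm (A.mulVec ((WithLp.equiv 2 (Fin n → ℝ)) x))

/-- The augmented Lagrangian `L_ρ(x, y, λ)` of the problem
`min F(x) + h(y)  s.t.  Ax + By = c`. -/
noncomputable def augLag {n d p : ℕ} (F : EuclideanSpace ℝ (Fin n) → ℝ)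
    (h : EuclideanSpace ℝ (Fin d) → ℝ) (A : Matrix (Fin p) (Fin n) ℝ)
    (B : Matrix (Fin p) (Fin d) ℝ) (c : EuclideanSpace ℝ (Fin p)) (ρ : ℝ)
    (x : EuclideanSpace ℝ (Fin n)) (y : EuclideanSpace ℝ (Fin d))
    (lam : EuclideanSpace ℝ (Fin p)) : ℝ :=
  F x + h y - ⟪lam, mvec A x + mvec B y - c⟫ + (ρ / 2) * ‖mvec A x + mvec B y - c‖ ^ 2

theorem stmt_11 {n d p : ℕ} (F : EuclideanSpace ℝ (Fin n) → ℝ)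
    (h : EuclideanSpace ℝ (Fin d) → ℝ)
    (A : Matrix (Fin p) (Fin n) ℝ) (B : Matrix (Fin p) (Fin d) ℝ)
    (c : EuclideanSpace ℝ (Fin p)) (ρ : ℝ) (hρ : 0 < ρ)
    (x : EuclideanSpace ℝ (Fin n)) (y : EuclideanSpace ℝ (Fin d))
    (lamPrev lam : EuclideanSpace ℝ (Fin p))
    (hlam : lam = lamPrev - ρ • (mvec A x + mvec B y - c)) :
    ∀ ρ' : ℝ, 0 < ρ' →
      (augLag F h A B c ρ' x y lam =
        augLag F h A B c ρ x y lamPrev + (1 / ρ) * ‖lam - lamPrev‖ ^ 2 +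
          ((ρ' - ρ) / (2 * ρ ^ 2)) * ‖lam - lamPrev‖ ^ 2) ∧
      (ρ ≤ ρ' →
        augLag F h A B c ρ' x y lam ≤
          augLag F h A B c ρ x y lamPrev +
            (1 / ρ + (ρ' - ρ) / (2 * ρ ^ 2)) * ‖lam - lamPrev‖ ^ 2) := by
  intro ρ' hρ'
  set r : EuclideanSpace ℝ (Fin p) := mvec A x + mvec B y - c with hr
  have hdiff : lam - lamPrev = -(ρ • r) := by rw [hlam]; abel
  have hnorm : ‖lam - lamPrev‖ ^ 2 = ρ ^ 2 * ‖r‖ ^ 2 := by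
    rw [hdiff, norm_neg, norm_smul, mul_pow, Real.norm_eq_abs, sq_abs]
  have hinner : ⟪lam, r⟫ = ⟪lamPrev, r⟫ - ρ * ‖r‖ ^ 2 := by
    rw [hlam, inner_sub_left, real_inner_smul_left, real_inner_self_eq_norm_sq]
  have key : augLag F h A B c ρ' x y lam =
      augLag F h A B c ρ x y lamPrev + (1 / ρ) * ‖lam - lamPrev‖ ^ 2 +
        ((ρ' - ρ) / (2 * ρ ^ 2)) * ‖lam - lamPrev‖ ^ 2 := by
    unfold augLag
    rw [← hr, hinner, hnorm]
    field_simp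
    ring
  refine ⟨key, fun hle => ?_⟩
  rw [key]
  have h2 : (0:ℝ) ≤ ‖lam - lamPrev‖ ^ 2 := sq_nonneg _
  nlinarith [sq_nonneg ρ]
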